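/- Let w₀, x₀, y₀, z₀ be complex numbers with (w₀²z₀² − x₀²y₀²)(w₀²x₀² − y₀²z₀²)(w₀²y₀² − x₀²z₀²) ≠ 0, and let A, B, C, D be given by A = (w₀⁴ − x₀⁴ − y₀⁴ + z₀⁴)/(w₀²z₀² − x₀²y₀²), B = (w₀⁴ + x₀⁴ − y₀⁴ − z₀⁴)/(w₀²x₀² − y₀²z₀²), C = (w₀⁴ − x₀⁴ + y₀⁴ − z₀⁴)/(w₀²y₀² − x₀²z₀²), D = w₀x₀y₀z₀·∏_{ε,ε'∈{±1}}(w₀² + εx₀² + ε'y₀² + εε'z₀²)/((w₀²z₀² − x₀²y₀²)(w₀²x₀² − y₀²z₀²)(w₀²y₀² − x₀²z₀²)). Let F(w,x,y,z) = w⁴ + x⁴ + y⁴ + z⁴ + 2Dwxyz − A(w²z² + x²y²) − B(w²x² + y²z²) − C(w²y² + x²z²). Then each of the sixteen points obtained from (w₀, x₀, y₀, z₀) by applying one of the four coordinate permutations (w₀,x₀,y₀,z₀), (x₀,w₀,z₀,y₀), (y₀,z₀,w₀,x₀), (z₀,y₀,x₀,w₀), followed by one of the four sign changes (+,+,+,+),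 (−,−,+,+), (−,+,−,+), (−,+,+,−), is a singular point of the quartic surface F = 0; that is, F and all four partial derivatives ∂F/∂w, ∂F/∂x, ∂F/∂y, ∂F/∂z vanish at each of these sixteen points. -/

import Mathlib

set_option maxHeartbeats 2000000

/-- The Göpel–Hudson quartic polynomial. -/
def GH (A B C D w x y z : ℂ) : ℂ :=
  w ^ 4 + x ^ 4 + y ^ 4 + z ^ 4 + 2 * D * w * x * y * z
    - A * (w ^ 2 * z ^ 2 + x ^ 2 * y ^ 2) - B * (w ^ 2 * x ^ 2 + y ^ 2 * z ^ 2)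
    - C * (w ^ 2 * y ^ 2 + x ^ 2 * z ^ 2)

lemma deriv_cubic (a b c : ℂ) (w : ℂ) :
    deriv (fun t : ℂ => a + b * t + c * t ^ 2 + t ^ 4) w = b + c * (2 * w) + 4 * w ^ 3 := by
  have h : HasDerivAt (fun t : ℂ => a + b * t + c * t ^ 2 + t ^ 4)
      (b + c * (2 * w) + 4 * w ^ 3) w := by
    have := ((((hasDerivAt_id w).const_mul b).const_add a).add
      ((hasDerivAt_pow 2 w).const_mul c)).add (hasDerivAt_pow 4 w)
    refine this.congr_deriv ?_
    push_cast
    ring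
  exact h.deriv

lemma dGH_w (A B C D w x y z : ℂ) :
    deriv (fun t => GH A B C D t x y z) w
      = 2 * D * x * y * z + (-(A * z ^ 2) - B * x ^ 2 - C * y ^ 2) * (2 * w) + 4 * w ^ 3 := by
  have e : (fun t => GH A B C D t x y z)
      = fun t => (x ^ 4 + y ^ 4 + z ^ 4 - A * (x ^ 2 * y ^ 2) - B * (y ^ 2 * z ^ 2) - C * (x ^ 2 * z ^ 2)) + (2 * D * x * y * z) * t + (-(A * z ^ 2) - B * x ^ 2 - C * y ^ 2) * t ^ 2 + t ^ 4 := by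
    funext t; simp only [GH]; ring
  rw [e, deriv_cubic]

lemma dGH_x (A B C D w x y z : ℂ) :
    deriv (fun t => GH A B C D w t y z) x
      = 2 * D * w * y * z + (-(A * y ^ 2) - B * w ^ 2 - C * z ^ 2) * (2 * x) + 4 * x ^ 3 := by
  have e : (fun t => GH A B C D w t y z)
      = fun t => (w ^ 4 + y ^ 4 + z ^ 4 - A * (w ^ 2 * z ^ 2) - B * (y ^ 2 * z ^ 2) - C * (w ^ 2 * y ^ 2)) + (2 * D * w * y * z) * t + (-(A * y ^ 2) - B * w ^ 2 - C * z ^ 2) * t ^ 2 + t ^ 4 := by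
    funext t; simp only [GH]; ring
  rw [e, deriv_cubic]

lemma dGH_y (A B C D w x y z : ℂ) :
    deriv (fun t => GH A B C D w x t z) y
      = 2 * D * w * x * z + (-(A * x ^ 2) - B * z ^ 2 - C * w ^ 2) * (2 * y) + 4 * y ^ 3 := by
  have e : (fun t => GH A B C D w x t z)
      = fun t => (w ^ 4 + x ^ 4 + z ^ 4 - A * (w ^ 2 * z ^ 2) - B * (w ^ 2 * x ^ 2) - C * (x ^ 2 * z ^ 2)) + (2 * D * w * x * z) * t + (-(A * x ^ 2) - B * z ^ 2 - C * w ^ 2) * t ^ 2 + t ^ 4 := by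
    funext t; simp only [GH]; ring
  rw [e, deriv_cubic]

lemma dGH_z (A B C D w x y z : ℂ) :
    deriv (fun t => GH A B C D w x y t) z
      = 2 * D * w * x * y + (-(A * w ^ 2) - B * y ^ 2 - C * x ^ 2) * (2 * z) + 4 * z ^ 3 := by
  have e : (fun t => GH A B C D w x y t)
      = fun t => (w ^ 4 + x ^ 4 + y ^ 4 - A * (x ^ 2 * y ^ 2) - B * (w ^ 2 * x ^ 2) - C * (w ^ 2 * y ^ 2)) + (2 * D * w * x * y) * t + (-(A * w ^ 2) - B * y ^ 2 - C * x ^ 2) * t ^ 2 + t ^ 4 := by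
    funext t; simp only [GH]; ring
  rw [e, deriv_cubic]

/-- The sixteen nodes of the Göpel–Hudson quartic with moduli parametrized by
`(w₀, x₀, y₀, z₀)`: the quartic and all four partial derivatives vanish at each of the
sixteen points obtained from `(w₀, x₀, y₀, z₀)` by the four coordinate permutations and the
four sign changes. -/
theorem goepel_hudson_sixteen_nodes (w0 x0 y0 z0 A B C D : ℂ)
    (hden : (w0 ^ 2 * z0 ^ 2 - x0 ^ 2 * y0 ^ 2) * (w0 ^ 2 * x0 ^ 2 - y0 ^ 2 * z0 ^ 2) *
      (w0 ^ 2 * y0 ^ 2 - x0 ^ 2 * z0 ^ 2) ≠ 0)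
    (hA : A = (w0 ^ 4 - x0 ^ 4 - y0 ^ 4 + z0 ^ 4) / (w0 ^ 2 * z0 ^ 2 - x0 ^ 2 * y0 ^ 2))
    (hB : B = (w0 ^ 4 + x0 ^ 4 - y0 ^ 4 - z0 ^ 4) / (w0 ^ 2 * x0 ^ 2 - y0 ^ 2 * z0 ^ 2))
    (hC : C = (w0 ^ 4 - x0 ^ 4 + y0 ^ 4 - z0 ^ 4) / (w0 ^ 2 * y0 ^ 2 - x0 ^ 2 * z0 ^ 2))
    (hD : D = w0 * x0 * y0 * z0 *
        ((w0 ^ 2 + x0 ^ 2 + y0 ^ 2 + z0 ^ 2) * (w0 ^ 2 + x0 ^ 2 - y0 ^ 2 - z0 ^ 2) *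
         (w0 ^ 2 - x0 ^ 2 + y0 ^ 2 - z0 ^ 2) * (w0 ^ 2 - x0 ^ 2 - y0 ^ 2 + z0 ^ 2)) /
      ((w0 ^ 2 * z0 ^ 2 - x0 ^ 2 * y0 ^ 2) * (w0 ^ 2 * x0 ^ 2 - y0 ^ 2 * z0 ^ 2) *
       (w0 ^ 2 * y0 ^ 2 - x0 ^ 2 * z0 ^ 2))) :
    ∀ w x y z : ℂ,
      (w, x, y, z) ∈ ([(w0, x0, y0, z0), (-w0, -x0, y0, z0),
          (-w0, x0, -y0, z0), (-w0, x0, y0, -z0),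
          (x0, w0, z0, y0), (-x0, -w0, z0, y0), (-x0, w0, -z0, y0), (-x0, w0, z0, -y0),
          (y0, z0, w0, x0), (-y0, -z0, w0, x0), (-y0, z0, -w0, x0), (-y0, z0, w0, -x0),
          (z0, y0, x0, w0), (-z0, -y0, x0, w0), (-z0, y0, -x0, w0), (-z0, y0, x0, -w0)] :
        List (ℂ × ℂ × ℂ × ℂ)) →
      GH A B C D w x y z = 0 ∧
      deriv (fun t => GH A B C D t x y z) w = 0 ∧
      deriv (fun t => GH A B C D w t y z) x = 0 ∧
      deriv (fun t => GH A B C D w x t z) y = 0 ∧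
      deriv (fun t => GH A B C D w x y t) z = 0 := by
  have hd1 : w0 ^ 2 * z0 ^ 2 - x0 ^ 2 * y0 ^ 2 ≠ 0 := by
    intro h; apply hden; rw [h]; ring
  have hd2 : w0 ^ 2 * x0 ^ 2 - y0 ^ 2 * z0 ^ 2 ≠ 0 := by
    intro h; apply hden; rw [h]; ring
  have hd3 : w0 ^ 2 * y0 ^ 2 - x0 ^ 2 * z0 ^ 2 ≠ 0 := by
    intro h; apply hden; rw [h]; ring
  rw [eq_div_iff hd1] at hA
  rw [eq_div_iff hd2] at hB
  rw [eq_div_iff hd3] at hC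
  rw [eq_div_iff hden] at hD
  have e0 : (w0 ^ 4 + x0 ^ 4 + y0 ^ 4 + z0 ^ 4 + 2 * D * w0 * x0 * y0 * z0
      - A * (w0 ^ 2 * z0 ^ 2 + x0 ^ 2 * y0 ^ 2) - B * (w0 ^ 2 * x0 ^ 2 + y0 ^ 2 * z0 ^ 2)
      - C * (w0 ^ 2 * y0 ^ 2 + x0 ^ 2 * z0 ^ 2)) = 0 := by
    have h : (w0 ^ 4 + x0 ^ 4 + y0 ^ 4 + z0 ^ 4 + 2 * D * w0 * x0 * y0 * z0
      - A * (w0 ^ 2 * z0 ^ 2 + x0 ^ 2 * y0 ^ 2) - B * (w0 ^ 2 * x0 ^ 2 + y0 ^ 2 * z0 ^ 2)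
      - C * (w0 ^ 2 * y0 ^ 2 + x0 ^ 2 * z0 ^ 2))
        * ((w0 ^ 2 * z0 ^ 2 - x0 ^ 2 * y0 ^ 2) * (w0 ^ 2 * x0 ^ 2 - y0 ^ 2 * z0 ^ 2) * (w0 ^ 2 * y0 ^ 2 - x0 ^ 2 * z0 ^ 2)) = 0 := by
      linear_combination (-(w0 ^ 2 * z0 ^ 2 + x0 ^ 2 * y0 ^ 2) * (w0 ^ 2 * x0 ^ 2 - y0 ^ 2 * z0 ^ 2) * (w0 ^ 2 * y0 ^ 2 - x0 ^ 2 * z0 ^ 2)) * hA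
        + (-(w0 ^ 2 * x0 ^ 2 + y0 ^ 2 * z0 ^ 2) * (w0 ^ 2 * z0 ^ 2 - x0 ^ 2 * y0 ^ 2) * (w0 ^ 2 * y0 ^ 2 - x0 ^ 2 * z0 ^ 2)) * hB
        + (-(w0 ^ 2 * y0 ^ 2 + x0 ^ 2 * z0 ^ 2) * (w0 ^ 2 * z0 ^ 2 - x0 ^ 2 * y0 ^ 2) * (w0 ^ 2 * x0 ^ 2 - y0 ^ 2 * z0 ^ 2)) * hC
        + (2 * w0 * x0 * y0 * z0) * hD
    exact (mul_eq_zero.mp h).resolve_right hden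
  have e1 : 2 * D * x0 * y0 * z0 + (-(A * z0 ^ 2) - B * x0 ^ 2 - C * y0 ^ 2) * (2 * w0)
      + 4 * w0 ^ 3 = 0 := by
    have h : (2 * D * x0 * y0 * z0 + (-(A * z0 ^ 2) - B * x0 ^ 2 - C * y0 ^ 2) * (2 * w0)
        + 4 * w0 ^ 3) * ((w0 ^ 2 * z0 ^ 2 - x0 ^ 2 * y0 ^ 2) * (w0 ^ 2 * x0 ^ 2 - y0 ^ 2 * z0 ^ 2) * (w0 ^ 2 * y0 ^ 2 - x0 ^ 2 * z0 ^ 2)) = 0 := by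
      linear_combination (-(z0 ^ 2) * 2 * w0 * (w0 ^ 2 * x0 ^ 2 - y0 ^ 2 * z0 ^ 2) * (w0 ^ 2 * y0 ^ 2 - x0 ^ 2 * z0 ^ 2)) * hA
        + (-(x0 ^ 2) * 2 * w0 * (w0 ^ 2 * z0 ^ 2 - x0 ^ 2 * y0 ^ 2) * (w0 ^ 2 * y0 ^ 2 - x0 ^ 2 * z0 ^ 2)) * hB
        + (-(y0 ^ 2) * 2 * w0 * (w0 ^ 2 * z0 ^ 2 - x0 ^ 2 * y0 ^ 2) * (w0 ^ 2 * x0 ^ 2 - y0 ^ 2 * z0 ^ 2)) * hC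
        + (2 * x0 * y0 * z0) * hD
    exact (mul_eq_zero.mp h).resolve_right hden
  have e2 : 2 * D * w0 * y0 * z0 + (-(A * y0 ^ 2) - B * w0 ^ 2 - C * z0 ^ 2) * (2 * x0)
      + 4 * x0 ^ 3 = 0 := by
    have h : (2 * D * w0 * y0 * z0 + (-(A * y0 ^ 2) - B * w0 ^ 2 - C * z0 ^ 2) * (2 * x0)
        + 4 * x0 ^ 3) * ((w0 ^ 2 * z0 ^ 2 - x0 ^ 2 * y0 ^ 2) * (w0 ^ 2 * x0 ^ 2 - y0 ^ 2 * z0 ^ 2) * (w0 ^ 2 * y0 ^ 2 - x0 ^ 2 * z0 ^ 2)) = 0 := by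
      linear_combination (-(y0 ^ 2) * 2 * x0 * (w0 ^ 2 * x0 ^ 2 - y0 ^ 2 * z0 ^ 2) * (w0 ^ 2 * y0 ^ 2 - x0 ^ 2 * z0 ^ 2)) * hA
        + (-(w0 ^ 2) * 2 * x0 * (w0 ^ 2 * z0 ^ 2 - x0 ^ 2 * y0 ^ 2) * (w0 ^ 2 * y0 ^ 2 - x0 ^ 2 * z0 ^ 2)) * hB
        + (-(z0 ^ 2) * 2 * x0 * (w0 ^ 2 * z0 ^ 2 - x0 ^ 2 * y0 ^ 2) * (w0 ^ 2 * x0 ^ 2 - y0 ^ 2 * z0 ^ 2)) * hC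
        + (2 * w0 * y0 * z0) * hD
    exact (mul_eq_zero.mp h).resolve_right hden
  have e3 : 2 * D * w0 * x0 * z0 + (-(A * x0 ^ 2) - B * z0 ^ 2 - C * w0 ^ 2) * (2 * y0)
      + 4 * y0 ^ 3 = 0 := by
    have h : (2 * D * w0 * x0 * z0 + (-(A * x0 ^ 2) - B * z0 ^ 2 - C * w0 ^ 2) * (2 * y0)
        + 4 * y0 ^ 3) * ((w0 ^ 2 * z0 ^ 2 - x0 ^ 2 * y0 ^ 2) * (w0 ^ 2 * x0 ^ 2 - y0 ^ 2 * z0 ^ 2) * (w0 ^ 2 * y0 ^ 2 - x0 ^ 2 * z0 ^ 2)) = 0 := by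
      linear_combination (-(x0 ^ 2) * 2 * y0 * (w0 ^ 2 * x0 ^ 2 - y0 ^ 2 * z0 ^ 2) * (w0 ^ 2 * y0 ^ 2 - x0 ^ 2 * z0 ^ 2)) * hA
        + (-(z0 ^ 2) * 2 * y0 * (w0 ^ 2 * z0 ^ 2 - x0 ^ 2 * y0 ^ 2) * (w0 ^ 2 * y0 ^ 2 - x0 ^ 2 * z0 ^ 2)) * hB
        + (-(w0 ^ 2) * 2 * y0 * (w0 ^ 2 * z0 ^ 2 - x0 ^ 2 * y0 ^ 2) * (w0 ^ 2 * x0 ^ 2 - y0 ^ 2 * z0 ^ 2)) * hC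
        + (2 * w0 * x0 * z0) * hD
    exact (mul_eq_zero.mp h).resolve_right hden
  have e4 : 2 * D * w0 * x0 * y0 + (-(A * w0 ^ 2) - B * y0 ^ 2 - C * x0 ^ 2) * (2 * z0)
      + 4 * z0 ^ 3 = 0 := by
    have h : (2 * D * w0 * x0 * y0 + (-(A * w0 ^ 2) - B * y0 ^ 2 - C * x0 ^ 2) * (2 * z0)
        + 4 * z0 ^ 3) * ((w0 ^ 2 * z0 ^ 2 - x0 ^ 2 * y0 ^ 2) * (w0 ^ 2 * x0 ^ 2 - y0 ^ 2 * z0 ^ 2) * (w0 ^ 2 * y0 ^ 2 - x0 ^ 2 * z0 ^ 2)) = 0 := by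
      linear_combination (-(w0 ^ 2) * 2 * z0 * (w0 ^ 2 * x0 ^ 2 - y0 ^ 2 * z0 ^ 2) * (w0 ^ 2 * y0 ^ 2 - x0 ^ 2 * z0 ^ 2)) * hA
        + (-(y0 ^ 2) * 2 * z0 * (w0 ^ 2 * z0 ^ 2 - x0 ^ 2 * y0 ^ 2) * (w0 ^ 2 * y0 ^ 2 - x0 ^ 2 * z0 ^ 2)) * hB
        + (-(x0 ^ 2) * 2 * z0 * (w0 ^ 2 * z0 ^ 2 - x0 ^ 2 * y0 ^ 2) * (w0 ^ 2 * x0 ^ 2 - y0 ^ 2 * z0 ^ 2)) * hC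
        + (2 * w0 * x0 * y0) * hD
    exact (mul_eq_zero.mp h).resolve_right hden
  clear hA hB hC hD hd1 hd2 hd3 hden
  intro w x y z hmem
  simp only [List.mem_cons, List.not_mem_nil, or_false, Prod.mk.injEq] at hmem
  rcases hmem with ⟨rfl, rfl, rfl, rfl⟩|⟨rfl, rfl, rfl, rfl⟩|⟨rfl, rfl, rfl, rfl⟩|⟨rfl, rfl, rfl, rfl⟩|⟨rfl, rfl, rfl, rfl⟩|⟨rfl, rfl, rfl, rfl⟩|⟨rfl, rfl, rfl, rfl⟩|⟨rfl, rfl, rfl, rfl⟩|⟨rfl, rfl, rfl, rfl⟩|⟨rfl, rfl, rfl, rfl⟩|⟨rfl, rfl, rfl, rfl⟩|⟨rfl, rfl, rfl, rfl⟩|⟨rfl, rfl, rfl, rfl⟩|⟨rfl, rfl, rfl, rfl⟩|⟨rfl, rfl, rfl, rfl⟩|⟨rfl, rfl, rfl, rfl⟩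
  all_goals exact ⟨by simp only [GH]; linear_combination e0,
    by rw [dGH_w]; first
      | linear_combination e1
      | linear_combination -e1
      | linear_combination e2
      | linear_combination -e2
      | linear_combination e3
      | linear_combination -e3
      | linear_combination e4
      | linear_combination -e4,
    by rw [dGH_x]; first
      | linear_combination e1
      | linear_combination -e1
      | linear_combination e2
      | linear_combination -e2
      | linear_combination e3
      | linear_combination -e3
      | linear_combination e4
      | linear_combination -e4,
    by rw [dGH_y]; first
      | linear_combination e1
      | linear_combination -e1
      | linear_combination e2
      | linear_combination -e2
      | linear_combination e3
      | linear_combination -e3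
      | linear_combination e4
      | linear_combination -e4,
    by rw [dGH_z]; first
      | linear_combination e1
      | linear_combination -e1
      | linear_combination e2
      | linear_combination -e2
      | linear_combination e3
      | linear_combination -e3
      | linear_combination e4
      | linear_combination -e4⟩
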